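/- Let N ∈ ℝ⁴ with η_N = Nᵘσᵤ, det η_N = t ∈ {−1,1}, and n ∈ ℂ² with s = ⟨n,n⟩_N ∈ {−1,1}. Then for any w ∈ ℂ² with s⟨w,w⟩_N > 0, one has t·s⟨w,w⟩_N ≥ t|⟨w,n⟩_N|², and if t = −1 or equality holds in a suitable sense then (s⟨w,w⟩_N)^{t·2j} ≥ |⟨w,n⟩_N|^{t·4j} for j > 0, with equality if and only if w = ξn for some ξ ∈ ℂ. -/

import Mathlib

open Matrix

/-- The standard symplectic form on `ℂ²`. -/
noncomputable def symp : Matrix (Fin 2) (Fin 2) ℂ := !![0, 1; -1, 0]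

/-- The symplectic bracket `[z,w] = zᵀ ω w = z₀ w₁ − z₁ w₀`. -/
noncomputable def bracket (z w : Fin 2 → ℂ) : ℂ := z ⬝ᵥ symp.mulVec w

/-- The hermitian matrix `η_N = Nᵘσᵤ` associated to a vector of Minkowski space. -/
noncomputable def etaN (N : Fin 4 → ℝ) : Matrix (Fin 2) (Fin 2) ℂ :=
  !![(N 0 : ℂ) + (N 3 : ℂ), (N 1 : ℂ) - Complex.I * (N 2 : ℂ);
     (N 1 : ℂ) + Complex.I * (N 2 : ℂ), (N 0 : ℂ) - (N 3 : ℂ)]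

/-- The hermitian pairing `⟨z₁,z₂⟩_N = z₁† η_Nᵀ z₂`. -/
noncomputable def herm (N : Fin 4 → ℝ) (z₁ z₂ : Fin 2 → ℂ) : ℂ :=
  star z₁ ⬝ᵥ (etaN N)ᵀ.mulVec z₂

/-- The Minkowski scalar product in signature `(+,−,−,−)`. -/
noncomputable def mink (N M : Fin 4 → ℝ) : ℝ :=
  N 0 * M 0 - N 1 * M 1 - N 2 * M 2 - N 3 * M 3

lemma key (N : Fin 4 → ℝ) (n w : Fin 2 → ℂ) :
    herm N n n * herm N w w - herm N n w * herm N w n =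
      (mink N N : ℂ) * ((n 0 * w 1 - n 1 * w 0) * star (n 0 * w 1 - n 1 * w 0)) := by
  simp only [herm, etaN, mink, dotProduct, Matrix.mulVec, Fin.sum_univ_two, Pi.star_apply,
    Complex.star_def, map_sub, _root_.map_mul]
  simp only [Matrix.of_apply, Matrix.transpose_apply, Matrix.cons_val', Matrix.cons_val_zero,
    Matrix.cons_val_one, Matrix.head_cons, Matrix.empty_val', Matrix.cons_val_fin_one,
    Matrix.head_fin_const]
  push_cast
  linear_combination (((N 2:ℂ))^2 * ((starRingEnd ℂ) (n 0) * n 0 * w 1 * (starRingEnd ℂ) (w 1)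
    - (starRingEnd ℂ) (n 0) * (starRingEnd ℂ) (w 1) * n 1 * w 0
    - n 0 * w 1 * (starRingEnd ℂ) (n 1) * (starRingEnd ℂ) (w 0)
    + n 1 * w 0 * (starRingEnd ℂ) (n 1) * (starRingEnd ℂ) (w 0))) * Complex.I_sq

lemma hermsymm (N : Fin 4 → ℝ) (z₁ z₂ : Fin 2 → ℂ) :
    herm N z₂ z₁ = star (herm N z₁ z₂) := by
  simp only [herm, etaN, dotProduct, Matrix.mulVec, Fin.sum_univ_two, Pi.star_apply,
    Complex.star_def, map_add, map_sub, _root_.map_mul, Complex.conj_conj, Complex.conj_ofReal,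
    Complex.conj_I]
  simp only [Matrix.of_apply, Matrix.transpose_apply, Matrix.cons_val', Matrix.cons_val_zero,
    Matrix.cons_val_one, Matrix.head_cons, Matrix.empty_val', Matrix.cons_val_fin_one,
    Matrix.head_fin_const]
  ring_nf
  simp [Complex.conj_ofReal]
  ring

lemma rpow_aux {X Y c : ℝ} (hY : 0 < Y) (hc : 0 < c) (h : Y ≤ X) :
    Y ^ c ≤ X ^ c ∧ (X ^ c = Y ^ c ↔ X = Y) := by
  refine ⟨Real.rpow_le_rpow hY.le h hc.le, ?_, fun h' => by rw [h']⟩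
  intro hEq
  by_contra hne
  have hlt : Y < X := lt_of_le_of_ne h (Ne.symm hne)
  exact absurd hEq.symm (ne_of_lt (Real.rpow_lt_rpow hY.le hlt hc))

theorem stmt_7 (N : Fin 4 → ℝ) (t s : ℝ)
    (ht : t = 1 ∨ t = -1) (hs : s = 1 ∨ s = -1)
    (hN : mink N N = t)
    (n : Fin 2 → ℂ) (hn : herm N n n = (s : ℂ))
    (w : Fin 2 → ℂ) (hw : 0 < s * (herm N w w).re)
    (hwn : 0 < ‖herm N w n‖)
    (j : ℝ) (hj : 0 < j) :
    t * (s * (herm N w w).re) ≥ t * ‖herm N w n‖ ^ 2 ∧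
    Real.rpow (s * (herm N w w).re) (t * (2 * j)) ≥
      Real.rpow (‖herm N w n‖) (t * (4 * j)) ∧
    (Real.rpow (s * (herm N w w).re) (t * (2 * j)) =
        Real.rpow (‖herm N w n‖) (t * (4 * j)) ↔
      ∃ ξ : ℂ, w = ξ • n) := by
  simp only [Real.rpow_eq_pow]
  set a := herm N w n with ha_def
  set d : ℂ := n 0 * w 1 - n 1 * w 0 with hd_def
  set X := s * (herm N w w).re with hX_def
  set A := ‖a‖ with hA_def
  have haneq : a ≠ 0 := norm_pos_iff.mp hwn
  have hnne : n ≠ 0 := by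
    intro h; apply haneq; rw [ha_def, h]; simp [herm]
  -- complex identity
  have hkey := key N n w
  rw [hn, hermsymm N w n, ← ha_def, hN] at hkey
  -- real identity : X - A^2 = t * normSq d
  have hreal : X - A ^ 2 = t * Complex.normSq d := by
    have h1 : star a * a = (Complex.normSq a : ℂ) := by
      rw [Complex.star_def, Complex.normSq_eq_conj_mul_self]
    have h2 : d * star d = (Complex.normSq d : ℂ) := by
      rw [Complex.star_def, mul_comm, Complex.normSq_eq_conj_mul_self]
    rw [← hd_def, h1, h2] at hkey
    have := congrArg Complex.re hkey
    simp only [Complex.sub_re, Complex.mul_re, Complex.ofReal_re, Complex.ofReal_im] at this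
    rw [hX_def, hA_def, Complex.sq_norm]
    simpa using this
  have hD : 0 ≤ Complex.normSq d := Complex.normSq_nonneg d
  have hA2pos : 0 < A ^ 2 := by positivity
  -- proportionality characterization
  have hprop : d = 0 ↔ ∃ ξ : ℂ, w = ξ • n := by
    constructor
    · intro hd
      rw [hd_def] at hd
      by_cases h0 : n 0 = 0
      · have h1 : n 1 ≠ 0 := by
          intro h1; apply hnne; funext i; fin_cases i <;> simp [h0, h1]
        refine ⟨w 1 / n 1, ?_⟩
        funext i; fin_cases i
        · show w 0 = w 1 / n 1 * n 0
          have hz : n 1 * w 0 = 0 := by rw [h0] at hd; linear_combination -hd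
          rcases mul_eq_zero.mp hz with h | h
          · exact absurd h h1
          · rw [h, h0]; ring
        · show w 1 = w 1 / n 1 * n 1
          field_simp
      · refine ⟨w 0 / n 0, ?_⟩
        funext i; fin_cases i
        · show w 0 = w 0 / n 0 * n 0
          field_simp
        · show w 1 = w 0 / n 0 * n 1
          rw [div_mul_eq_mul_div, eq_div_iff h0]
          linear_combination hd
    · rintro ⟨ξ, rfl⟩
      rw [hd_def]; simp only [Pi.smul_apply, smul_eq_mul]; ring
  have hnormd : Complex.normSq d = 0 ↔ ∃ ξ : ℂ, w = ξ • n := by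
    rw [Complex.normSq_eq_zero, hprop]
  -- first inequality
  have part1 : t * X ≥ t * A ^ 2 := by
    rcases ht with rfl | rfl <;> nlinarith [hD]
  refine ⟨part1, ?_⟩
  -- rewrite the rhs rpow with base A^2
  have hAB : A ^ (t * (4 * j)) = (A ^ 2) ^ (t * (2 * j)) := by
    rw [← Real.rpow_natCast A 2, ← Real.rpow_mul hwn.le]
    congr 1
    push_cast
    ring
  rw [hAB]
  -- case analysis on t
  rcases ht with rfl | rfl
  · -- t = 1 : X ≥ A^2
    have hle : A ^ 2 ≤ X := by nlinarith [hD]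
    have base := rpow_aux hA2pos (by positivity : (0:ℝ) < 1 * (2 * j)) hle
    refine ⟨base.1, ?_⟩
    rw [base.2, ← hnormd]
    constructor
    · intro h; nlinarith
    · intro h; nlinarith
  · -- t = -1 : A^2 ≥ X
    have hle : X ≤ A ^ 2 := by nlinarith [hD]
    have hXpos : 0 < X := hw
    have base := rpow_aux hXpos (by positivity : (0:ℝ) < 2 * j) hle
    have hexp : (-1 : ℝ) * (2 * j) = -(2 * j) := by ring
    rw [hexp, Real.rpow_neg hXpos.le, Real.rpow_neg hA2pos.le]
    have hXp : 0 < X ^ (2 * j) := Real.rpow_pos_of_pos hXpos _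
    constructor
    · exact inv_anti₀ hXp base.1
    · rw [_root_.inv_inj, eq_comm, base.2, ← hnormd]
      constructor
      · intro h; nlinarith
      · intro h; nlinarith
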